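/- Let A, B be nondeterministic Büchi automata over the same alphabet Σ and let f : ARun(A) → ARun(B) be a continuous function (with respect to the metric d(x,y) = inf{2^{-i} : x_j = y_j for all j < i} on infinite sequences). Then Duplicator has a winning strategy in the delay game G^f_del(A,B), i.e. A ⊑^f_del B. -/

import Mathlib

open Classical

noncomputable section

namespace MultiBuffer

/-! ### Nondeterministic Büchi automata -/

/-- A nondeterministic Büchi automaton over the alphabet `α`. -/
structure NBA (α : Type) : Type 1 where
  Q : Type
  finQ : Fintype Q
  init : Q
  δ : Q → α → Set Q
  F : Set Q

variable {α P Q : Type} {k : ℕ}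

/-- `r` is (the state sequence of) a run of `A` on the infinite word `w`. -/
def IsRun (A : NBA α) (w : ℕ → α) (r : ℕ → A.Q) : Prop :=
  r 0 = A.init ∧ ∀ n, r (n + 1) ∈ A.δ (r n) (w n)

/-- The state sequence `r` visits accepting states infinitely often. -/
def AcceptingStates (A : NBA α) (r : ℕ → A.Q) : Prop :=
  {n | r n ∈ A.F}.Infinite

/-- The ω-language of a Büchi automaton. -/
def Lang (A : NBA α) : Set (ℕ → α) :=
  {w | ∃ r, IsRun A w r ∧ AcceptingStates A r}

/-! ### Finite or infinite words, projections and trace equivalence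

A finite or infinite word over `α` is represented as a function `ℕ → Option α`
which is `none` from some point on (if finite); infinite words embed via `ofInf`. -/

/-- The infinite word `u` viewed as an element of `Σ^∞`. -/
def ofInf (u : ℕ → α) : ℕ → Option α := fun n => some (u n)

/-- A function `ℕ → Option α` represents a finite or infinite word if after the
first `none` everything is `none`. -/
def Stable (w : ℕ → Option α) : Prop := ∀ n, w n = none → w (n + 1) = none

/-- The number of `i < j` satisfying `p`. -/
def countBelow (p : ℕ → Prop) (j : ℕ) : ℕ := {i | i < j ∧ p i}.ncard

/-- Position `j` of the word `w` carries a letter belonging to `S`. -/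
def InS (S : Set α) (w : ℕ → Option α) (j : ℕ) : Prop := ∃ a ∈ S, w j = some a

/-- The projection `π_S(w)` of the word `w` to the subalphabet `S`: the word obtained
from `w` by deleting all letters not in `S`. -/
def proj (S : Set α) (w : ℕ → Option α) (n : ℕ) : Option α :=
  if h : ∃ j, InS S w j ∧ countBelow (InS S w) j = n then w h.choose else none

/-- Trace equivalence of (finite or infinite) words w.r.t. the trace alphabet
`σ = (Σ_i)_{i ∈ [k]}` : all projections coincide. -/
def TraceEquiv (σ : Fin k → Set α) (u v : ℕ → Option α) : Prop :=
  ∀ i, proj (σ i) u = proj (σ i) v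

/-- The trace closure of a language of infinite words. -/
def closure (σ : Fin k → Set α) (L : Set (ℕ → α)) : Set (ℕ → α) :=
  {v | ∃ u ∈ L, TraceEquiv σ (ofInf u) (ofInf v)}

/-! ### The multi-buffer game -/

/-- A configuration of the multi-buffer game: a state of Spoiler's automaton,
the contents of the `k` buffers, and a state of Duplicator's automaton. -/
structure Conf (α P Q : Type) (k : ℕ) where
  p : P
  bufs : Fin k → List α
  q : Q

/-- Appending the letter `a` to the back of every buffer `i` with `a ∈ σ i`. -/
def push (σ : Fin k → Set α) (bufs : Fin k → List α) (a : α) : Fin k → List α :=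
  fun i => if a ∈ σ i then bufs i ++ [a] else bufs i

/-- Popping the letter `b` from the front of every buffer `i` with `b ∈ σ i`. -/
def pop (σ : Fin k → Set α) (bufs : Fin k → List α) (b : α) : Fin k → List α :=
  fun i => if b ∈ σ i then (bufs i).tail else bufs i

/-- Effect of a Spoiler move `m = (a, p')` on a configuration. -/
def spApply (σ : Fin k → Set α) (c : Conf α P Q k) (m : α × P) : Conf α P Q k :=
  ⟨m.2, push σ c.bufs m.1, c.q⟩

/-- Effect of a (possibly empty) Duplicator move `d = (b₁,q₁)...(b_n,q_n)`. -/
def dupApply (σ : Fin k → Set α) (c : Conf α P Q k) (d : List (α × Q)) : Conf α P Q k :=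
  ⟨c.p, d.foldl (fun bs m => pop σ bs m.1) c.bufs, ((d.getLast?).map Prod.snd).getD c.q⟩

/-- Legality of a Spoiler move: it follows a transition of his automaton. -/
def SpLegal (δA : P → α → Set P) (c : Conf α P Q k) (m : α × P) : Prop :=
  m.2 ∈ δA c.p m.1

/-- Legality of a Duplicator move from a configuration: the moves form a run of her
automaton and each letter is removed from the front of the corresponding buffers. -/
def DupLegal (σ : Fin k → Set α) (δB : Q → α → Set Q) :
    Conf α P Q k → List (α × Q) → Prop
  | _, [] => True
  | c, m :: rest =>
      m.2 ∈ δB c.q m.1 ∧ (∀ i, m.1 ∈ σ i → (c.bufs i).head? = some m.1) ∧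
      DupLegal σ δB ⟨c.p, pop σ c.bufs m.1, m.2⟩ rest

/-- The capacity constraints (checked after a full round). -/
def CapOk (κ : Fin k → ℕ∞) (c : Conf α P Q k) : Prop :=
  ∀ i, ((c.bufs i).length : ℕ∞) ≤ κ i

/-- The list of the first `n` values of the sequence `s`. -/
def hist {β : Type} (s : ℕ → β) (n : ℕ) : List β := List.ofFn (fun i : Fin n => s i)

/-- The configuration of the play after `n` full rounds, when Spoiler plays the
sequence `s` of moves and Duplicator follows the strategy `θ` (which maps the
history of Spoiler moves, including the current one, to her response). -/
def playConf (σ : Fin k → Set α) (θ : List (α × P) → List (α × Q))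
    (c0 : Conf α P Q k) (s : ℕ → α × P) : ℕ → Conf α P Q k
  | 0 => c0
  | n + 1 => dupApply σ (spApply σ (playConf σ θ c0 s n) (s n)) (θ (hist s (n + 1)))

/-- Duplicator's response in round `n`. -/
def resp (θ : List (α × P) → List (α × Q)) (s : ℕ → α × P) (n : ℕ) : List (α × Q) :=
  θ (hist s (n + 1))

/-- Spoiler's move in round `n` is legal. -/
def SpLegalAt (σ : Fin k → Set α) (δA : P → α → Set P) (θ : List (α × P) → List (α × Q))
    (c0 : Conf α P Q k) (s : ℕ → α × P) (n : ℕ) : Prop :=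
  SpLegal δA (playConf σ θ c0 s n) (s n)

/-- Duplicator's response in round `n` is legal and the capacities are respected
after the round. -/
def DupOkAt (σ : Fin k → Set α) (κ : Fin k → ℕ∞) (δB : Q → α → Set Q)
    (θ : List (α × P) → List (α × Q)) (c0 : Conf α P Q k) (s : ℕ → α × P) (n : ℕ) : Prop :=
  DupLegal σ δB (spApply σ (playConf σ θ c0 s n) (s n)) (resp θ s n) ∧
  CapOk κ (playConf σ θ c0 s (n + 1))

/-- The number of occurrences of the letter `a` in Spoiler's word. -/
def spOcc (s : ℕ → α × P) (a : α) : ℕ∞ := {n | (s n).1 = a}.encard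

/-- The number of occurrences of the letter `a` in Duplicator's word. -/
def dupOcc (θ : List (α × P) → List (α × Q)) (s : ℕ → α × P) (a : α) : ℕ∞ :=
  {x : ℕ × ℕ | ∃ m, (resp θ s x.1)[x.2]? = some m ∧ m.1 = a}.encard

/-- Spoiler's run is accepting. -/
def SpAccept (FA : Set P) (s : ℕ → α × P) : Prop := {n | (s n).2 ∈ FA}.Infinite

/-- Duplicator's run is (infinite and) accepting. -/
def DupAccept (FB : Set Q) (θ : List (α × P) → List (α × Q)) (s : ℕ → α × P) : Prop :=
  {n | ∃ m ∈ resp θ s n, m.2 ∈ FB}.Infinite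

/-- Duplicator has a winning strategy in the multi-buffer game (with buffer alphabets
`σ`, capacities `κ`) played on the transition structures `δA`, `δB` with acceptance
sets `FA`, `FB`, starting from the configuration `c0`: she always has legal responses
(as long as Spoiler has played legally), and if the resulting infinite play carries an
accepting run of Spoiler then her own run is infinite and accepting and every letter
occurs equally often in both words (i.e. every letter put into a buffer is eventually
read). Finite plays in which a player is stuck are lost by that player. -/
def DupWinsFrom (σ : Fin k → Set α) (κ : Fin k → ℕ∞) (δA : P → α → Set P)
    (δB : Q → α → Set Q) (FA : Set P) (FB : Set Q) (c0 : Conf α P Q k) : Prop :=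
  ∃ θ : List (α × P) → List (α × Q),
    ∀ s : ℕ → α × P,
      (∀ n, (∀ m ≤ n, SpLegalAt σ δA θ c0 s m) → DupOkAt σ κ δB θ c0 s n) ∧
      ((∀ n, SpLegalAt σ δA θ c0 s n) → SpAccept FA s →
        DupAccept FB θ s ∧ ∀ a : α, spOcc s a = dupOcc θ s a)

/-- The multi-buffer simulation `A ⊑^κ_σ B`. -/
def Simu (σ : Fin k → Set α) (κ : Fin k → ℕ∞) (A B : NBA α) : Prop :=
  DupWinsFrom σ κ A.δ B.δ A.F B.F ⟨A.init, fun _ => [], B.init⟩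


/-! ### Accepting runs, the metric on runs, continuity and trace preservation -/

variable {α : Type}

/-- The set of accepting runs of an NBA, as a type: a run `q₀ a₀ q₁ a₁ ⋯` is given
by its state sequence and its word, and it must start in the initial state, follow
the transition function, and visit `F` infinitely often. -/
def ARun (A : NBA α) : Type :=
  {x : (ℕ → A.Q) × (ℕ → α) //
    x.1 0 = A.init ∧ (∀ n, x.1 (n + 1) ∈ A.δ (x.1 n) (x.2 n)) ∧ {n | x.1 n ∈ A.F}.Infinite}

/-- An accepting run viewed as the infinite sequence `q₀ a₀ q₁ a₁ ⋯ ∈ (Q ∪ Σ)^ω`. -/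
def seqOf {A : NBA α} (ρ : ARun A) : ℕ → A.Q ⊕ α :=
  fun n => if n % 2 = 0 then Sum.inl (ρ.val.1 (n / 2)) else Sum.inr (ρ.val.2 (n / 2))

/-- Continuity of `f : ARun A → ARun B` with respect to the metric
`d(x,y) = inf {2^{-i} ∣ x_j = y_j for all j < i}` on the sequences in `(Q ∪ Σ)^ω`:
for every run `ρ` and every required output precision `2^{-n}` there is an input
precision `2^{-m}` such that runs `2^{-m}`-close to `ρ` are mapped to runs
`2^{-n}`-close to `f ρ`. -/
def ContinuousRF {A B : NBA α} (f : ARun A → ARun B) : Prop :=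
  ∀ (ρ : ARun A) (n : ℕ), ∃ m : ℕ, ∀ ρ' : ARun A,
    (∀ j < m, seqOf ρ' j = seqOf ρ j) → ∀ j < n, seqOf (f ρ') j = seqOf (f ρ) j

/-- `f : ARun A → ARun B` is trace-preserving: the word of `f ρ` is trace
equivalent to the word of `ρ`. -/
def TracePres {k : ℕ} (σ : Fin k → Set α) {A B : NBA α} (f : ARun A → ARun B) : Prop :=
  ∀ ρ : ARun A, TraceEquiv σ (ofInf ρ.val.2) (ofInf (f ρ).val.2)

/-- The capacity function making all `k` buffers unbounded. -/
def kapAllOmega (k : ℕ) : Fin k → ℕ∞ := fun _ => ⊤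

/-- A list of moves `(a₁,q₁)(a₂,q₂)⋯` is a finite run of the transition structure
of `B` starting in the state `q`. -/
def FinRunOk (B : NBA α) : B.Q → List (α × B.Q) → Prop
  | _, [] => True
  | q, m :: rest => m.2 ∈ B.δ q m.1 ∧ FinRunOk B m.2 rest

/-- The state sequence of Spoiler's run determined by his moves `s` in the delay
game (in round `n` he appends the letter `(s n).1` and moves to the state `(s n).2`). -/
def spState (A : NBA α) (s : ℕ → α × A.Q) : ℕ → A.Q
  | 0 => A.init
  | n + 1 => (s n).2

/-- The concatenation of Duplicator's responses in the first `n` rounds of the delay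
game, her strategy `θ` mapping the history of Spoiler moves (including the current
one) to the finite extension of her run she plays in that round. -/
def dOut {QB : Type} (θ : List (α × P) → List (α × QB)) (s : ℕ → α × P) : ℕ → List (α × QB)
  | 0 => []
  | n + 1 => dOut θ s n ++ θ (hist s (n + 1))

/-- Duplicator has a winning strategy in the delay game `G^f_del(A,B)`: in every
round Spoiler extends his run by one transition and Duplicator extends hers by
`n ≥ 0` transitions; Duplicator's moves must always be legal, and if Spoiler's moves
form an (infinite) accepting run `ρ` of `A` then Duplicator's run `ρ'` must be the
infinite run `f ρ` (since elements of `ARun A` are accepting by definition, the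
quantification over `ρ : ARun A` below is vacuous when Spoiler's run is not
accepting, in which case Duplicator wins anyway). -/
def DelayWin (A B : NBA α) (f : ARun A → ARun B) : Prop :=
  ∃ θ : List (α × A.Q) → List (α × B.Q),
    ∀ s : ℕ → α × A.Q,
      (∀ n, (∀ m < n, (s m).2 ∈ A.δ (spState A s m) (s m).1) →
        FinRunOk B B.init (dOut θ s n)) ∧
      ((∀ n, (s n).2 ∈ A.δ (spState A s n) (s n).1) →
        ∀ ρ : ARun A, ρ.val.1 = spState A s → ρ.val.2 = (fun n => (s n).1) →
          (∀ N : ℕ, ∃ n, N ≤ (dOut θ s n).length) ∧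
          (∀ n i x, (dOut θ s n)[i]? = some x → x = ((f ρ).val.2 i, (f ρ).val.1 (i + 1))))


/-! ### Auxiliary development for the proof -/

section DelayProof

variable {A B : NBA α}

/-- `ρ` is consistent with the finite history `h` of Spoiler moves. -/
def Cons (A : NBA α) (h : List (α × A.Q)) (ρ : ARun A) : Prop :=
  ∀ j, j < h.length → h[j]? = some (ρ.val.2 j, ρ.val.1 (j + 1))

/-- All runs consistent with `h` have the same first `n` output transitions. -/
def Agr (f : ARun A → ARun B) (h : List (α × A.Q)) (n : ℕ) : Prop :=
  ∀ ρ' ρ'' : ARun A, Cons A h ρ' → Cons A h ρ'' → ∀ i, i < n →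
    (f ρ').val.2 i = (f ρ'').val.2 i ∧ (f ρ').val.1 (i + 1) = (f ρ'').val.1 (i + 1)

/-- The number of output transitions determined by `h` (capped at `h.length`). -/
def Nh (f : ARun A → ARun B) (h : List (α × A.Q)) : ℕ :=
  @Nat.findGreatest (Agr f h) (Classical.decPred _) h.length

/-- Total output of Duplicator after seeing history `h`. -/
def totalOut (f : ARun A → ARun B) (h : List (α × A.Q)) : List (α × B.Q) :=
  if hc : ∃ ρ, Cons A h ρ then
    List.ofFn (fun i : Fin (Nh f h) => ((f hc.choose).val.2 i, (f hc.choose).val.1 (i + 1)))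
  else []

/-- Duplicator's strategy. -/
def dupStrat (f : ARun A → ARun B) : List (α × A.Q) → List (α × B.Q) :=
  fun h => (totalOut f h).drop (totalOut f h.dropLast).length

lemma cons_take {h : List (α × A.Q)} {ρ : ARun A} (hc : Cons A h ρ) (m : ℕ) :
    Cons A (h.take m) ρ := by
  intro j hj
  rw [List.length_take] at hj
  rw [List.getElem?_take, if_pos (lt_of_lt_of_le hj (min_le_left _ _))]
  exact hc j (lt_of_lt_of_le hj (min_le_right _ _))

lemma agr_zero (f : ARun A → ARun B) (h : List (α × A.Q)) : Agr f h 0 :=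
  fun _ _ _ _ i hi => absurd hi (Nat.not_lt_zero i)

lemma agr_take {f : ARun A → ARun B} {h : List (α × A.Q)} {m n : ℕ}
    (ha : Agr f (h.take m) n) : Agr f h n :=
  fun ρ' ρ'' h' h'' => ha ρ' ρ'' (cons_take h' m) (cons_take h'' m)

lemma nh_agr (f : ARun A → ARun B) (h : List (α × A.Q)) : Agr f h (Nh f h) :=
  Nat.findGreatest_spec (P := Agr f h) (m := 0) (Nat.zero_le _) (agr_zero f h)

lemma nh_le (f : ARun A → ARun B) (h : List (α × A.Q)) : Nh f h ≤ h.length :=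
  @Nat.findGreatest_le _ (Classical.decPred _) _

lemma length_totalOut {f : ARun A → ARun B} {h : List (α × A.Q)}
    (hc : ∃ ρ, Cons A h ρ) : (totalOut f h).length = Nh f h := by
  rw [totalOut, dif_pos hc, List.length_ofFn]

lemma totalOut_nil (f : ARun A → ARun B) : totalOut f ([] : List (α × A.Q)) = [] := by
  have h0 : Nh f ([] : List (α × A.Q)) = 0 := Nat.le_zero.mp (nh_le f [])
  rw [totalOut]
  split
  · rw [h0]; simp
  · rfl

lemma nh_take_le (f : ARun A → ARun B) (h : List (α × A.Q)) (m : ℕ) :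
    Nh f (h.take m) ≤ Nh f h := by
  exact Nat.le_findGreatest (P := Agr f h)
    (le_trans (nh_le f _) (by rw [List.length_take]; exact min_le_right _ _))
    (agr_take (nh_agr f (h.take m)))

lemma totalOut_take {f : ARun A → ARun B} {h : List (α × A.Q)}
    (hc : ∃ ρ, Cons A h ρ) (m : ℕ) :
    totalOut f (h.take m) = (totalOut f h).take (Nh f (h.take m)) := by
  obtain ⟨ρ, hρ⟩ := hc
  have hc' : ∃ ρ', Cons A (h.take m) ρ' := ⟨ρ, cons_take hρ m⟩
  have hc2 : ∃ ρ', Cons A h ρ' := ⟨ρ, hρ⟩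
  have hle : Nh f (h.take m) ≤ Nh f h := nh_take_le f h m
  rw [totalOut, totalOut, dif_pos hc', dif_pos hc2]
  apply List.ext_getElem
  · simp [hle]
  · intro i h1 h2
    simp only [List.getElem_ofFn, List.getElem_take]
    have hi : i < Nh f (h.take m) := by simpa using h1
    have hagr := nh_agr f (h.take m) hc'.choose hc2.choose hc'.choose_spec
        (cons_take hc2.choose_spec m) i hi
    exact Prod.ext hagr.1 hagr.2

lemma hist_getElem? {β : Type} (s : ℕ → β) (n j : ℕ) :
    (hist s n)[j]? = if j < n then some (s j) else none := by
  rw [hist, List.getElem?_ofFn]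
  split
  · next hh => simp [if_pos hh]
  · next hh => simp [if_neg hh]


lemma hist_length {β : Type} (s : ℕ → β) (n : ℕ) : (hist s n).length = n := by
  simp [hist]

lemma hist_take {β : Type} (s : ℕ → β) {m n : ℕ} (hmn : m ≤ n) :
    hist s m = (hist s n).take m := by
  apply List.ext_getElem?
  intro j
  rw [List.getElem?_take, hist_getElem?]
  split
  · next hj => rw [hist_getElem?, if_pos (lt_of_lt_of_le hj hmn)]
  · next hj => rfl

lemma hist_zero {β : Type} (s : ℕ → β) : hist s 0 = [] := by
  simp [hist]

lemma hist_dropLast {β : Type} (s : ℕ → β) (n : ℕ) :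
    (hist s (n + 1)).dropLast = hist s n := by
  rw [List.dropLast_eq_take, hist_length, Nat.add_sub_cancel,
    ← hist_take s (Nat.le_succ n)]

/-- A list of successive transitions of an accepting run of `B` is a finite run. -/
lemma finRunOk_ofFn (ρB : ARun B) :
    ∀ n k, FinRunOk B (ρB.val.1 k)
      (List.ofFn (fun i : Fin n => (ρB.val.2 (k + i), ρB.val.1 (k + i + 1)))) := by
  intro n
  induction n with
  | zero => intro k; rw [List.ofFn_zero]; exact trivial
  | succ n ih =>
    intro k
    rw [List.ofFn_succ]
    refine ⟨by simpa using ρB.property.2.1 k, ?_⟩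
    have hl : (List.ofFn fun i : Fin n =>
          (ρB.val.2 (k + ((i.succ : Fin (n+1)) : ℕ)),
            ρB.val.1 (k + ((i.succ : Fin (n+1)) : ℕ) + 1)))
        = List.ofFn fun i : Fin n =>
            (ρB.val.2 (k + 1 + (i : ℕ)), ρB.val.1 (k + 1 + (i : ℕ) + 1)) := by
      congr 1
      funext i
      rw [show k + ((i.succ : Fin (n+1)) : ℕ) = k + 1 + (i : ℕ) from by
        rw [Fin.val_succ]; omega]
    show FinRunOk B (ρB.val.2 (k + ((0 : Fin (n+1)) : ℕ)),
        ρB.val.1 (k + ((0 : Fin (n+1)) : ℕ) + 1)).2 _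
    rw [hl, show k + ((0 : Fin (n+1)) : ℕ) + 1 = k + 1 from by simp]
    exact ih (k + 1)

lemma finRunOk_totalOut (f : ARun A → ARun B) (h : List (α × A.Q)) :
    FinRunOk B B.init (totalOut f h) := by
  rw [totalOut]
  split
  · next hc =>
    have := finRunOk_ofFn (f hc.choose) (Nh f h) 0
    rw [(f hc.choose).property.1] at this
    simpa using this
  · exact trivial

/-- Two runs consistent with the same history agree on the corresponding prefix
of their `(Q ∪ Σ)`-sequences. -/
lemma seq_agree {h : List (α × A.Q)} {ρ' ρ : ARun A}
    (h1 : Cons A h ρ') (h2 : Cons A h ρ) :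
    ∀ j ≤ 2 * h.length, seqOf ρ' j = seqOf ρ j := by
  intro j hj
  rw [seqOf, seqOf]
  by_cases hp : j % 2 = 0
  · rw [if_pos hp, if_pos hp]
    rcases Nat.eq_zero_or_pos (j / 2) with h0 | h0
    · rw [h0, ρ'.property.1, ρ.property.1]
    · obtain ⟨u, hu⟩ : ∃ u, j / 2 = u + 1 := ⟨j / 2 - 1, by omega⟩
      have hul : u < h.length := by omega
      have e2 := h2 u hul
      rw [h1 u hul] at e2
      have pe := Option.some.inj e2
      rw [hu]
      exact congrArg Sum.inl (congrArg Prod.snd pe)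
  · rw [if_neg hp, if_neg hp]
    have hul : j / 2 < h.length := by omega
    have e2 := h2 (j / 2) hul
    rw [h1 (j / 2) hul] at e2
    exact congrArg Sum.inr (congrArg Prod.fst (Option.some.inj e2))

/-- Recovering transitions from agreement of `(Q ∪ Σ)`-sequences. -/
lemma decode {x y : ARun B} {N : ℕ}
    (hxy : ∀ j, j < 2 * N + 2 → seqOf x j = seqOf y j) :
    ∀ i, i < N → x.val.2 i = y.val.2 i ∧ x.val.1 (i + 1) = y.val.1 (i + 1) := by
  intro i hi
  constructor
  · have h1 := hxy (2 * i + 1) (by omega)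
    rw [seqOf, seqOf, if_neg (by omega), if_neg (by omega),
      show (2 * i + 1) / 2 = i from by omega] at h1
    exact Sum.inr.inj h1
  · have h1 := hxy (2 * i + 2) (by omega)
    rw [seqOf, seqOf, if_pos (by omega), if_pos (by omega),
      show (2 * i + 2) / 2 = i + 1 from by omega] at h1
    exact Sum.inl.inj h1

lemma dOut_eq (f : ARun A → ARun B) (s : ℕ → α × A.Q) :
    ∀ n, (∃ ρ, Cons A (hist s n) ρ) →
      dOut (dupStrat f) s n = totalOut f (hist s n) := by
  intro n
  induction n with
  | zero =>
    intro _
    show ([] : List (α × B.Q)) = _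
    rw [hist_zero, totalOut_nil]
  | succ n ih =>
    intro hc
    have hcn : ∃ ρ, Cons A (hist s n) ρ := by
      obtain ⟨ρ, hρ⟩ := hc
      exact ⟨ρ, by rw [hist_take s (Nat.le_succ n)]; exact cons_take hρ n⟩
    show dOut (dupStrat f) s n ++ dupStrat f (hist s (n + 1)) = _
    rw [ih hcn]
    simp only [dupStrat, hist_dropLast]
    have h1 : totalOut f (hist s n)
        = (totalOut f (hist s (n + 1))).take (Nh f (hist s n)) := by
      have := totalOut_take (f := f) hc n
      rw [← hist_take s (Nat.le_succ n)] at this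
      exact this
    have hpre : totalOut f (hist s n) <+: totalOut f (hist s (n + 1)) := by
      rw [h1]; exact List.take_prefix _ _
    obtain ⟨t, ht⟩ := hpre
    rw [← ht, List.drop_left]

lemma dOut_ex (f : ARun A → ARun B) (s : ℕ → α × A.Q) :
    ∀ n, ∃ m, dOut (dupStrat f) s n = totalOut f (hist s m) := by
  intro n
  induction n with
  | zero =>
    exact ⟨0, by show ([] : List (α × B.Q)) = _; rw [hist_zero, totalOut_nil]⟩
  | succ n ih =>
    by_cases hc : ∃ ρ, Cons A (hist s (n + 1)) ρ
    · exact ⟨n + 1, dOut_eq f s (n + 1) hc⟩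
    · obtain ⟨m, hm⟩ := ih
      refine ⟨m, ?_⟩
      show dOut (dupStrat f) s n ++ dupStrat f (hist s (n + 1)) = _
      have hz : totalOut f (hist s (n + 1)) = [] := by
        rw [totalOut, dif_neg hc]
      have hz' : dupStrat f (hist s (n + 1)) = [] := by
        simp only [dupStrat, hz, List.drop_nil]
      rw [hz', List.append_nil, hm]

end DelayProof

/-- **Lemma.** If `f : ARun(A) → ARun(B)` is continuous (w.r.t. the metric
`d(x,y) = inf {2^{-i} ∣ x_j = y_j for all j < i}`), then Duplicator has a winning
strategy in the delay game `G^f_del(A,B)`, i.e. `A ⊑^f_del B`. -/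
theorem delayWin_of_continuous {α : Type} [Fintype α] (A B : NBA α)
    (f : ARun A → ARun B) (hf : ContinuousRF f) : DelayWin A B f := by
  classical
  refine ⟨dupStrat f, fun s => ⟨?_, ?_⟩⟩
  · intro n _
    obtain ⟨m, hm⟩ := dOut_ex f s n
    rw [hm]
    exact finRunOk_totalOut f _
  · intro _ ρ hρ1 hρ2
    have hconsρ : ∀ n, Cons A (hist s n) ρ := by
      intro n j hj
      rw [hist_length] at hj
      rw [hist_getElem?, if_pos hj]
      congr 1
      rw [hρ2, hρ1]
      rfl
    constructor
    · intro N
      obtain ⟨m, hmspec⟩ := hf ρ (2 * N + 2)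
      refine ⟨max m N, ?_⟩
      have hc : ∃ ρ', Cons A (hist s (max m N)) ρ' := ⟨ρ, hconsρ _⟩
      rw [dOut_eq f s _ hc, length_totalOut hc]
      have hAgr : Agr f (hist s (max m N)) N := by
        intro ρ' ρ'' h' h'' i hi
        have key : ∀ τ : ARun A, Cons A (hist s (max m N)) τ →
            ∀ j, j < 2 * N + 2 → seqOf (f τ) j = seqOf (f ρ) j := by
          intro τ hτ
          apply hmspec
          intro j hj
          apply seq_agree hτ (hconsρ _)
          rw [hist_length]
          omega
        have d1 := decode (key ρ' h') i hi
        have d2 := decode (key ρ'' h'') i hi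
        exact ⟨d1.1.trans d2.1.symm, d1.2.trans d2.2.symm⟩
      exact Nat.le_findGreatest (by rw [hist_length]; exact le_max_right m N) hAgr
    · intro n i x hx
      have hc : ∃ ρ', Cons A (hist s n) ρ' := ⟨ρ, hconsρ n⟩
      rw [dOut_eq f s n hc, totalOut, dif_pos hc, List.getElem?_ofFn] at hx
      split at hx
      · next hi =>
        have hx' := Option.some.inj hx
        have hagr := nh_agr f (hist s n) hc.choose ρ hc.choose_spec (hconsρ n) i hi
        rw [← hx']
        exact Prod.ext hagr.1 hagr.2
      · exact absurd hx (by simp)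

end MultiBuffer
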